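/- arXiv:0706.0819 — 4 statements merged into one kernel-verified Lean document; each statement's English description precedes it below -/
import Mathlib

section
/- For every real number r with 0 ≤ r ≤ 1 and every complex number z with |z| ≤ 1/2, one has | |z+1|^r - 1 | ≤ r (1 + 2^(1-r)) |z|. -/
/-- For every real `r` with `0 ≤ r ≤ 1` and every complex `z` with `|z| ≤ 1/2`,
`| |z+1|^r - 1 | ≤ r (1 + 2^(1-r)) |z|`. -/
theorem stmt_5 (r : ℝ) (hr0 : 0 ≤ r) (hr1 : r ≤ 1) (z : ℂ) (hz : ‖z‖ ≤ 1 / 2) :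
    |‖z + 1‖ ^ r - 1| ≤ r * (1 + (2 : ℝ) ^ (1 - r)) * ‖z‖ := by
  set a : ℝ := ‖z‖ with ha
  set t : ℝ := ‖z + 1‖ with htdef
  have ha0 : 0 ≤ a := norm_nonneg z
  have htu : t ≤ 1 + a := by
    have := norm_add_le z 1
    simpa [add_comm] using this
  have htl : 1 - a ≤ t := by
    have h := norm_add_le (z + 1) (-z)
    have e : z + 1 + -z = 1 := by ring
    rw [e, norm_one, norm_neg] at h
    linarith
  have ht2 : (1:ℝ)/2 ≤ t := by linarith
  have ht0 : 0 < t := by linarith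
  have hp0 : (0:ℝ) ≤ (2:ℝ) ^ (1 - r) := Real.rpow_nonneg (by norm_num) _
  have hp1 : (1:ℝ) ≤ (2:ℝ) ^ (1 - r) := Real.one_le_rpow (by norm_num) (by linarith)
  rw [abs_le]
  constructor
  · -- lower bound: 1 - t^r ≤ r*(1+2^(1-r))*a
    rcases le_or_gt 1 t with h1 | h1
    · have : (1:ℝ) ≤ t ^ r := Real.one_le_rpow h1 hr0
      nlinarith [mul_nonneg (mul_nonneg hr0 (by linarith : (0:ℝ) ≤ 1 + (2:ℝ)^(1-r))) ha0]
    · -- t < 1; Bernoulli at 1/t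
      have hs : -1 ≤ 1/t - 1 := by
        have : 0 < 1/t := by positivity
        linarith
      have hb := rpow_one_add_le_one_add_mul_self hs hr0 hr1
      have e1 : (1 + (1/t - 1)) = 1/t := by ring
      rw [e1] at hb
      -- hb : (1/t)^r ≤ 1 + r*(1/t - 1)
      have htr0 : 0 < t ^ r := Real.rpow_pos_of_pos ht0 r
      have hinv : (1/t) ^ r = (t ^ r)⁻¹ := by
        rw [one_div, Real.inv_rpow ht0.le]
      rw [hinv] at hb
      -- multiply by t^r : 1 ≤ t^r + r*(1/t-1)*t^r
      have hb2 : 1 ≤ t ^ r + r * (1/t - 1) * t ^ r := by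
        have := mul_le_mul_of_nonneg_right hb htr0.le
        rw [inv_mul_cancel₀ htr0.ne'] at this
        linarith [this]
      -- (1/t-1)*t^r = (1-t) * t^(r-1)
      have e2 : (1/t - 1) * t ^ r = (1 - t) * t ^ (r - 1) := by
        rw [Real.rpow_sub ht0, Real.rpow_one]
        field_simp
      rw [mul_assoc, e2, ← mul_assoc] at hb2
      -- t^(r-1) ≤ 2^(1-r)
      have h3 : t ^ (r - 1) ≤ (2:ℝ) ^ (1 - r) := by
        have := Real.rpow_le_rpow_of_nonpos (by norm_num : (0:ℝ) < 1/2) ht2 (by linarith : r - 1 ≤ 0)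
        calc t ^ (r-1) ≤ ((1:ℝ)/2) ^ (r-1) := this
          _ = (2:ℝ) ^ (1 - r) := by
              rw [one_div, Real.inv_rpow (by norm_num), ← Real.rpow_neg (by norm_num)]
              norm_num
      have h1t : 0 ≤ 1 - t := by linarith
      have h4 : r * (1 - t) * t ^ (r-1) ≤ r * a * (2:ℝ) ^ (1 - r) := by
        have : r * (1 - t) ≤ r * a := by nlinarith
        have hrt : 0 ≤ r * (1 - t) := by positivity
        calc r * (1 - t) * t ^ (r-1) ≤ r * (1 - t) * (2:ℝ)^(1-r) :=
              mul_le_mul_of_nonneg_left h3 hrt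
          _ ≤ r * a * (2:ℝ)^(1-r) := mul_le_mul_of_nonneg_right this hp0
      nlinarith [mul_nonneg (mul_nonneg hr0 ha0) hp0, mul_nonneg hr0 ha0]
  · -- upper bound: t^r - 1 ≤ r*(1+2^(1-r))*a
    have hs : -1 ≤ t - 1 := by linarith
    have hb := rpow_one_add_le_one_add_mul_self hs hr0 hr1
    have e1 : (1 + (t - 1)) = t := by ring
    rw [e1] at hb
    -- hb : t^r ≤ 1 + r*(t-1)
    have : r * (t - 1) ≤ r * a := by nlinarith
    nlinarith [mul_nonneg (mul_nonneg hr0 ha0) hp0]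
end

section
/- Let a ∈ ℂ, let α ≥ 0 with α ≠ 2, let σ ∈ {1, -1}, and define u : (0,∞) × ℝ → ℂ by u(t,x) = a · exp(i x²/(4t)) / (it)^(1/2) · exp( i σ |a|^α t^(1-α/2) / (1-α/2) ), where (it)^(1/2) = √t · e^(iπ/4). Then for every t > 0 and every x ∈ ℝ, u satisfies pointwise the nonlinear Schrödinger equation i ∂_t u(t,x) + ∂_x² u(t,x) + σ |u(t,x)|^α u(t,x) = 0. -/
/-- The self-similar function
`u(t,x) = a e^{i x²/(4t)} / (it)^{1/2} · e^{i σ |a|^α t^{1-α/2}/(1-α/2)}`, with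
`(it)^{1/2} = √t e^{iπ/4}`, satisfies pointwise the NLS
`i ∂_t u + ∂_x² u + σ |u|^α u = 0` for `t > 0`, when `α ≥ 0`, `α ≠ 2`, `σ = ±1`. -/
theorem stmt_8 (a : ℂ) (α : ℝ) (hα : 0 ≤ α) (hα2 : α ≠ 2) (σ : ℝ) (hσ : σ = 1 ∨ σ = -1)
    (u : ℝ → ℝ → ℂ)
    (hu : ∀ t x : ℝ, u t x =
      a * Complex.exp (Complex.I * (x : ℂ) ^ 2 / (4 * (t : ℂ))) /
        ((Real.sqrt t : ℂ) * Complex.exp (Complex.I * (Real.pi : ℂ) / 4)) *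
        Complex.exp (Complex.I * (σ : ℂ) *
          ((‖a‖ ^ α * t ^ (1 - α / 2) / (1 - α / 2) : ℝ) : ℂ))) :
    ∀ t : ℝ, 0 < t → ∀ x : ℝ,
      Complex.I * deriv (fun τ : ℝ => u τ x) t + iteratedDeriv 2 (fun y : ℝ => u t y) x +
        (σ : ℂ) * ((‖u t x‖ ^ α : ℝ) : ℂ) * u t x = 0 := by
  intro t ht x
  have htne : t ≠ 0 := ht.ne'
  have htC : (t : ℂ) ≠ 0 := by exact_mod_cast htne
  have h2α : (2 : ℝ) - α ≠ 0 := fun h => hα2 (by linarith)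
  -- packed rewrite of u with rpow
  have hUeq : ∀ τ y : ℝ, 0 < τ → u τ y =
      a * Complex.exp (Complex.I * (y : ℂ) ^ 2 / (4 * (τ : ℂ)))
        * ((τ ^ (-(1/2) : ℝ) : ℝ) : ℂ)
        * (Complex.exp (Complex.I * (Real.pi : ℂ) / 4))⁻¹
        * Complex.exp (Complex.I * (σ : ℂ) *
          ((‖a‖ ^ α * τ ^ (1 - α / 2) / (1 - α / 2) : ℝ) : ℂ)) := by
    intro τ y hτ
    rw [hu τ y, Real.sqrt_eq_rpow]
    rw [show (τ ^ (-(1/2) : ℝ) : ℝ) = (τ ^ ((1 : ℝ)/2))⁻¹ by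
      rw [← Real.rpow_neg hτ.le]]
    push_cast
    rw [div_eq_mul_inv, mul_inv]
    ring
  -- time derivative
  have h3 : HasDerivAt (fun τ : ℝ => Complex.I * (x : ℂ) ^ 2 / (4 * (τ : ℂ)))
      (-(Complex.I * (x : ℂ) ^ 2) / (4 * (t : ℂ) ^ 2)) t := by
    have e : (fun τ : ℝ => Complex.I * (x : ℂ) ^ 2 / (4 * (τ : ℂ)))
        = fun τ : ℝ => Complex.I * (x : ℂ) ^ 2 / 4 * ((τ : ℂ))⁻¹ := by
      funext τ; ring
    rw [e]
    convert ((hasDerivAt_inv htC).comp_ofReal).const_mul (Complex.I * (x : ℂ) ^ 2 / 4) using 1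
    · rfl
    field_simp
  have hW : HasDerivAt (fun τ : ℝ => ((τ ^ (-(1/2) : ℝ) : ℝ) : ℂ))
      (((-(1/2) * t ^ ((-(1/2) : ℝ) - 1) : ℝ) : ℂ)) t :=
    (Real.hasDerivAt_rpow_const (p := -(1/2)) (Or.inl htne)).ofReal_comp
  have hr5 : HasDerivAt (fun τ : ℝ => Complex.exp (Complex.I * (σ : ℂ) *
      ((‖a‖ ^ α * τ ^ (1 - α / 2) / (1 - α / 2) : ℝ) : ℂ)))
      (Complex.exp (Complex.I * (σ : ℂ) *
        ((‖a‖ ^ α * t ^ (1 - α / 2) / (1 - α / 2) : ℝ) : ℂ))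
       * (Complex.I * (σ : ℂ) *
        ((‖a‖ ^ α * ((1 - α / 2) * t ^ (1 - α / 2 - 1)) / (1 - α / 2) : ℝ) : ℂ))) t :=
    (((((Real.hasDerivAt_rpow_const (p := 1 - α / 2) (Or.inl htne)).const_mul
      (‖a‖ ^ α)).div_const (1 - α / 2)).ofReal_comp).const_mul
      (Complex.I * (σ : ℂ))).cexp
  have hG := (((h3.cexp.const_mul a).mul hW).mul_const
      (Complex.exp (Complex.I * (Real.pi : ℂ) / 4))⁻¹).mul hr5
  have hEvent : (fun τ : ℝ => u τ x) =ᶠ[nhds t] (fun τ : ℝ =>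
      a * Complex.exp (Complex.I * (x : ℂ) ^ 2 / (4 * (τ : ℂ)))
        * ((τ ^ (-(1/2) : ℝ) : ℝ) : ℂ)
        * (Complex.exp (Complex.I * (Real.pi : ℂ) / 4))⁻¹
        * Complex.exp (Complex.I * (σ : ℂ) *
          ((‖a‖ ^ α * τ ^ (1 - α / 2) / (1 - α / 2) : ℝ) : ℂ))) := by
    filter_upwards [Ioi_mem_nhds ht] with τ hτ
    exact hUeq τ x hτ
  have hDt := hEvent.deriv_eq.trans hG.deriv
  -- space derivatives
  have hx2 : ∀ y : ℝ, HasDerivAt (fun y : ℝ => Complex.exp (Complex.I * (y : ℂ) ^ 2 / (4 * (t : ℂ))))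
      (Complex.exp (Complex.I * (y : ℂ) ^ 2 / (4 * (t : ℂ))) * (Complex.I * (2 * (y : ℂ)) / (4 * (t : ℂ)))) y := by
    intro y
    apply HasDerivAt.cexp
    have e : (fun y : ℝ => Complex.I * (y : ℂ) ^ 2 / (4 * (t : ℂ)))
        = fun y : ℝ => Complex.I / (4 * (t : ℂ)) * ((y : ℂ)) ^ 2 := by
      funext y; ring
    rw [e]
    convert ((hasDerivAt_pow 2 ((y : ℂ))).comp_ofReal).const_mul (Complex.I / (4 * (t : ℂ))) using 1
    · rfl
    push_cast
    ring
  have hspace : (fun y : ℝ => u t y) = fun y : ℝ =>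
      (a * ((t ^ (-(1/2) : ℝ) : ℝ) : ℂ) * (Complex.exp (Complex.I * (Real.pi : ℂ) / 4))⁻¹ *
        Complex.exp (Complex.I * (σ : ℂ) *
          ((‖a‖ ^ α * t ^ (1 - α / 2) / (1 - α / 2) : ℝ) : ℂ))) *
      Complex.exp (Complex.I * (y : ℂ) ^ 2 / (4 * (t : ℂ))) := by
    funext z
    rw [hUeq t z ht]
    ring
  have hd1 : (deriv fun y : ℝ => u t y) = fun y : ℝ =>
      (a * ((t ^ (-(1/2) : ℝ) : ℝ) : ℂ) * (Complex.exp (Complex.I * (Real.pi : ℂ) / 4))⁻¹ *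
        Complex.exp (Complex.I * (σ : ℂ) *
          ((‖a‖ ^ α * t ^ (1 - α / 2) / (1 - α / 2) : ℝ) : ℂ))) *
      (Complex.exp (Complex.I * (y : ℂ) ^ 2 / (4 * (t : ℂ))) * (Complex.I * (2 * (y : ℂ)) / (4 * (t : ℂ)))) := by
    rw [hspace]
    funext y
    exact ((hx2 y).const_mul _).deriv
  have hlin : HasDerivAt (fun y : ℝ => Complex.I * (2 * (y : ℂ)) / (4 * (t : ℂ)))
      (Complex.I * 2 / (4 * (t : ℂ))) x := by
    have e : (fun y : ℝ => Complex.I * (2 * (y : ℂ)) / (4 * (t : ℂ)))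
        = fun y : ℝ => (Complex.I * 2 / (4 * (t : ℂ))) * ((y : ℂ)) := by
      funext y; ring
    rw [e]
    simpa using ((hasDerivAt_id x).ofReal_comp).const_mul (Complex.I * 2 / (4 * (t : ℂ)))
  have h2nd : iteratedDeriv 2 (fun y : ℝ => u t y) x
      = (a * ((t ^ (-(1/2) : ℝ) : ℝ) : ℂ) * (Complex.exp (Complex.I * (Real.pi : ℂ) / 4))⁻¹ *
        Complex.exp (Complex.I * (σ : ℂ) *
          ((‖a‖ ^ α * t ^ (1 - α / 2) / (1 - α / 2) : ℝ) : ℂ)))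
        * (Complex.exp (Complex.I * (x : ℂ) ^ 2 / (4 * (t : ℂ))) * (Complex.I * (2 * (x : ℂ)) / (4 * (t : ℂ)))
            * (Complex.I * (2 * (x : ℂ)) / (4 * (t : ℂ)))
          + Complex.exp (Complex.I * (x : ℂ) ^ 2 / (4 * (t : ℂ))) * (Complex.I * 2 / (4 * (t : ℂ)))) := by
    rw [iteratedDeriv_succ, iteratedDeriv_one, hd1]
    exact (((hx2 x).mul hlin).const_mul _).deriv
  -- modulus
  have habs : (‖u t x‖) ^ α
      = ‖a‖ ^ α * t ^ (1 - α / 2 - 1) := by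
    rw [hu t x]
    simp only [norm_mul, norm_div]
    rw [show Complex.I * (x : ℂ) ^ 2 / (4 * (t : ℂ)) = ((x ^ 2 / (4 * t) : ℝ) : ℂ) * Complex.I by
        push_cast; ring,
      show Complex.I * (Real.pi : ℂ) / 4 = ((Real.pi / 4 : ℝ) : ℂ) * Complex.I by
        push_cast; ring,
      show Complex.I * (σ : ℂ) * ((‖a‖ ^ α * t ^ (1 - α / 2) / (1 - α / 2) : ℝ) : ℂ)
          = ((σ * (‖a‖ ^ α * t ^ (1 - α / 2) / (1 - α / 2)) : ℝ) : ℂ) * Complex.I by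
        push_cast; ring]
    rw [Complex.norm_exp_ofReal_mul_I, Complex.norm_exp_ofReal_mul_I, Complex.norm_exp_ofReal_mul_I,
      Complex.norm_of_nonneg (Real.sqrt_nonneg t), mul_one, mul_one, mul_one]
    rw [Real.div_rpow (norm_nonneg a) (Real.sqrt_nonneg t)]
    have hsr : Real.sqrt t ^ α = t ^ (α / 2) := by
      rw [Real.sqrt_eq_rpow, ← Real.rpow_mul ht.le]
      congr 1
      ring
    rw [hsr, show (1 - α / 2 - 1 : ℝ) = -(α / 2) by ring, Real.rpow_neg ht.le, div_eq_mul_inv]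
  -- assemble
  rw [hDt, h2nd, habs, hUeq t x ht]
  rw [show (‖a‖ ^ α * ((1 - α / 2) * t ^ (1 - α / 2 - 1)) / (1 - α / 2) : ℝ)
      = ‖a‖ ^ α * t ^ (1 - α / 2 - 1) by field_simp [h2α] <;> ring]
  rw [show ((‖a‖ ^ α * t ^ (1 - α / 2 - 1) : ℝ) : ℂ)
      = ((‖a‖ ^ α : ℝ) : ℂ) * ((t ^ (1 - α / 2 - 1) : ℝ) : ℂ) by push_cast; ring]
  rw [show ((-(1/2) * t ^ ((-(1/2) : ℝ) - 1) : ℝ) : ℂ)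
      = -(1/2) * (((t ^ (-(1/2) : ℝ) : ℝ) : ℂ) / (t : ℂ)) by
    rw [Real.rpow_sub ht, Real.rpow_one]; push_cast; ring]
  simp only [Pi.mul_apply]
  linear_combination (a * Complex.exp (Complex.I * (x : ℂ) ^ 2 / (4 * (t : ℂ)))
      * ((t ^ (-(1/2) : ℝ) : ℝ) : ℂ)
      * (Complex.exp (Complex.I * (Real.pi : ℂ) / 4))⁻¹
      * Complex.exp (Complex.I * (σ : ℂ) *
        ((‖a‖ ^ α * t ^ (1 - α / 2) / (1 - α / 2) : ℝ) : ℂ))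
      * (σ : ℂ) * ((‖a‖ ^ α : ℝ) : ℂ) * ((t ^ (1 - α / 2 - 1) : ℝ) : ℂ)) * Complex.I_sq
end

section
/- Let a ∈ ℂ and σ ∈ {1, -1}, and define u : (0,∞) × ℝ → ℂ by u(t,x) = a · exp(i x²/(4t)) / (it)^(1/2) · exp( i σ |a|² log t ), where (it)^(1/2) = √t · e^(iπ/4). Then for every t > 0 and every x ∈ ℝ, u satisfies pointwise the cubic nonlinear Schrödinger equation i ∂_t u(t,x) + ∂_x² u(t,x) + σ |u(t,x)|² u(t,x) = 0. -/
open Complex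
lemma nls_key (c X s T q B σ' : ℂ) (hsT : s ^ 2 = T) :
    Complex.I * (c * (-(s ^ 2)⁻¹ * (1 / (2 * s)) * X +
        s⁻¹ * (X * (Complex.I * q ^ 2 * (-((4 * T) ^ 2)⁻¹ * 4) +
          Complex.I * σ' * (B ^ 2 * T⁻¹))))) +
      (c * (s⁻¹ * X) * (Complex.I * q / (2 * T)) * (Complex.I * q / (2 * T)) +
        c * (s⁻¹ * X) * (Complex.I / (2 * T))) +
      σ' * (B ^ 2 / T) * (c * (s⁻¹ * X)) = 0 := by
  subst hsT
  linear_combination (c * X * σ' * B ^ 2 / s ^ 3) * Complex.I_sq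

set_option maxHeartbeats 1000000 in

/-- The function `u(t,x) = a e^{i x²/(4t)} / (it)^{1/2} · e^{i σ |a|² log t}`, with
`(it)^{1/2} = √t e^{iπ/4}`, satisfies pointwise the cubic NLS
`i ∂_t u + ∂_x² u + σ |u|² u = 0` for `t > 0`, when `σ = ±1`. -/
theorem stmt_9 (a : ℂ) (σ : ℝ) (hσ : σ = 1 ∨ σ = -1) (u : ℝ → ℝ → ℂ)
    (hu : ∀ t x : ℝ, u t x =
      a * Complex.exp (Complex.I * (x : ℂ) ^ 2 / (4 * (t : ℂ))) /
        ((Real.sqrt t : ℂ) * Complex.exp (Complex.I * (Real.pi : ℂ) / 4)) *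
        Complex.exp (Complex.I * (σ : ℂ) * ((‖a‖ ^ 2 * Real.log t : ℝ) : ℂ))) :
    ∀ t : ℝ, 0 < t → ∀ x : ℝ,
      Complex.I * deriv (fun τ : ℝ => u τ x) t + iteratedDeriv 2 (fun y : ℝ => u t y) x +
        (σ : ℂ) * ((‖u t x‖ ^ 2 : ℝ) : ℂ) * u t x = 0 := by
  intro t ht x
  set b : ℝ := ‖a‖ with hb
  set c : ℂ := a * (Complex.exp (Complex.I * (Real.pi : ℂ) / 4))⁻¹ with hc
  have hux : ∀ τ y : ℝ, u τ y =
      c * (((Real.sqrt τ : ℝ) : ℂ)⁻¹ *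
        Complex.exp (Complex.I * (y : ℂ) ^ 2 / (4 * (τ : ℂ)) +
          Complex.I * (σ : ℂ) * ((b ^ 2 * Real.log τ : ℝ) : ℂ))) := by
    intro τ y
    rw [hu, Complex.exp_add, hc]
    ring
  -- basic facts
  have hst : ((Real.sqrt t : ℝ) : ℂ) ^ 2 = (t : ℂ) := by
    norm_cast
    exact Real.sq_sqrt ht.le
  have hs0 : ((Real.sqrt t : ℝ) : ℂ) ≠ 0 := by
    simpa using (Real.sqrt_ne_zero ht.le).mpr ht.ne'
  have hT : (t : ℂ) ≠ 0 := by exact_mod_cast ht.ne'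
  -- time derivative
  have hofReal : ∀ y : ℝ, HasDerivAt (fun τ : ℝ => (τ : ℂ)) 1 y := by
    intro y
    simpa using (hasDerivAt_id y).ofReal_comp
  have hsqrt : HasDerivAt (fun τ : ℝ => ((Real.sqrt τ : ℝ) : ℂ))
      ((1 / (2 * Real.sqrt t) : ℝ) : ℂ) t := (Real.hasDerivAt_sqrt ht.ne').ofReal_comp
  have hsinv : HasDerivAt (fun τ : ℝ => ((Real.sqrt τ : ℝ) : ℂ)⁻¹)
      (-(((Real.sqrt t : ℝ) : ℂ) ^ 2)⁻¹ * ((1 / (2 * Real.sqrt t) : ℝ) : ℂ)) t :=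
    (hasDerivAt_inv hs0).comp t hsqrt
  have h4 : HasDerivAt (fun τ : ℝ => 4 * (τ : ℂ)) 4 t := by
    simpa using (hofReal t).const_mul (4 : ℂ)
  have h40 : 4 * (t : ℂ) ≠ 0 := by norm_num [hT]
  have h4inv : HasDerivAt (fun τ : ℝ => (4 * (τ : ℂ))⁻¹) (-((4 * (t : ℂ)) ^ 2)⁻¹ * 4) t :=
    (hasDerivAt_inv h40).comp t h4
  have hp1 : HasDerivAt (fun τ : ℝ => Complex.I * (x : ℂ) ^ 2 / (4 * (τ : ℂ)))
      (Complex.I * (x : ℂ) ^ 2 * (-((4 * (t : ℂ)) ^ 2)⁻¹ * 4)) t := by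
    simpa [div_eq_mul_inv] using h4inv.const_mul (Complex.I * (x : ℂ) ^ 2)
  have hlog : HasDerivAt (fun τ : ℝ => b ^ 2 * Real.log τ) (b ^ 2 * t⁻¹) t :=
    (Real.hasDerivAt_log ht.ne').const_mul (b ^ 2)
  have hp2 : HasDerivAt (fun τ : ℝ => Complex.I * (σ : ℂ) * ((b ^ 2 * Real.log τ : ℝ) : ℂ))
      (Complex.I * (σ : ℂ) * ((b ^ 2 * t⁻¹ : ℝ) : ℂ)) t :=
    hlog.ofReal_comp.const_mul (Complex.I * (σ : ℂ))
  have hv := ((hsinv.mul (hp1.add hp2).cexp).const_mul c)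
  have hderiv_t : deriv (fun τ : ℝ => u τ x) t =
      c * (-(((Real.sqrt t : ℝ) : ℂ) ^ 2)⁻¹ * ((1 / (2 * Real.sqrt t) : ℝ) : ℂ) *
          Complex.exp (Complex.I * (x : ℂ) ^ 2 / (4 * (t : ℂ)) +
            Complex.I * (σ : ℂ) * ((b ^ 2 * Real.log t : ℝ) : ℂ)) +
        ((Real.sqrt t : ℝ) : ℂ)⁻¹ *
          (Complex.exp (Complex.I * (x : ℂ) ^ 2 / (4 * (t : ℂ)) +
            Complex.I * (σ : ℂ) * ((b ^ 2 * Real.log t : ℝ) : ℂ)) *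
            (Complex.I * (x : ℂ) ^ 2 * (-((4 * (t : ℂ)) ^ 2)⁻¹ * 4) +
              Complex.I * (σ : ℂ) * ((b ^ 2 * t⁻¹ : ℝ) : ℂ)))) := by
    rw [show (fun τ : ℝ => u τ x) = _ from funext fun τ => hux τ x]
    exact hv.deriv
  -- spatial derivatives
  have hG : ∀ y : ℝ, HasDerivAt (fun y' : ℝ => u t y')
      (u t y * (Complex.I * (y : ℂ) / (2 * (t : ℂ)))) y := by
    intro y
    have hsq0 : HasDerivAt (fun y' : ℝ => ((y' ^ 2 : ℝ) : ℂ)) (((2 : ℕ) * y ^ 1 : ℝ) : ℂ) y :=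
      (hasDerivAt_pow 2 y).ofReal_comp
    have heq : (fun y' : ℝ => ((y' ^ 2 : ℝ) : ℂ)) = fun y' : ℝ => ((y' : ℂ)) ^ 2 := by
      funext y'; push_cast; ring
    rw [heq] at hsq0
    have hsq : HasDerivAt (fun y' : ℝ => Complex.I * (y' : ℂ) ^ 2 / (4 * (t : ℂ)))
        (Complex.I * (((2 : ℕ) * y ^ 1 : ℝ) : ℂ) / (4 * (t : ℂ))) y :=
      (hsq0.const_mul Complex.I).div_const (4 * (t : ℂ))
    have hEy := (hsq.add_const (Complex.I * (σ : ℂ) * ((b ^ 2 * Real.log t : ℝ) : ℂ))).cexp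
    have := ((hEy.const_mul (((Real.sqrt t : ℝ) : ℂ)⁻¹)).const_mul c)
    rw [show (fun y' : ℝ => u t y') = _ from funext fun y' => hux t y']
    refine this.congr_deriv ?_
    rw [hux t y]
    field_simp
    push_cast
    ring
  have hlin : HasDerivAt (fun y : ℝ => Complex.I * (y : ℂ) / (2 * (t : ℂ)))
      (Complex.I / (2 * (t : ℂ))) x := by
    simpa using (((hofReal x).const_mul Complex.I).div_const (2 * (t : ℂ)))
  have hsecond := (hG x).mul hlin
  have h2 : iteratedDeriv 2 (fun y : ℝ => u t y) x =
      u t x * (Complex.I * (x : ℂ) / (2 * (t : ℂ))) * (Complex.I * (x : ℂ) / (2 * (t : ℂ))) +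
        u t x * (Complex.I / (2 * (t : ℂ))) := by
    rw [iteratedDeriv_succ, iteratedDeriv_one]
    rw [show deriv (fun y : ℝ => u t y) =
        (fun y : ℝ => u t y * (Complex.I * (y : ℂ) / (2 * (t : ℂ)))) from
      funext fun y => (hG y).deriv]
    exact hsecond.deriv
  -- modulus
  have habs : (‖u t x‖) ^ 2 = b ^ 2 / t := by
    have e1 : Complex.I * (x : ℂ) ^ 2 / (4 * (t : ℂ)) = ((x ^ 2 / (4 * t) : ℝ) : ℂ) * Complex.I := by
      push_cast; ring
    have e2 : Complex.I * (Real.pi : ℂ) / 4 = ((Real.pi / 4 : ℝ) : ℂ) * Complex.I := by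
      push_cast; ring
    have e3 : Complex.I * (σ : ℂ) * ((b ^ 2 * Real.log t : ℝ) : ℂ) =
        ((σ * (b ^ 2 * Real.log t) : ℝ) : ℂ) * Complex.I := by
      push_cast; ring
    rw [hu, e1, e2, e3]
    rw [norm_mul, norm_div, norm_mul, norm_mul]
    rw [Complex.norm_exp_ofReal_mul_I, Complex.norm_exp_ofReal_mul_I, Complex.norm_exp_ofReal_mul_I,
      Complex.norm_of_nonneg (Real.sqrt_nonneg t)]
    simp [hb, div_pow, Real.sq_sqrt ht.le]
  rw [hderiv_t, h2, habs, hux t x]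
  have c1 : ((1 / (2 * Real.sqrt t) : ℝ) : ℂ) = 1 / (2 * ((Real.sqrt t : ℝ) : ℂ)) := by
    push_cast; ring
  have c2 : ((b ^ 2 * t⁻¹ : ℝ) : ℂ) = (b : ℂ) ^ 2 * ((t : ℝ) : ℂ)⁻¹ := by push_cast; ring
  have c3 : ((b ^ 2 / t : ℝ) : ℂ) = (b : ℂ) ^ 2 / ((t : ℝ) : ℂ) := by push_cast; ring
  rw [c1, c2, c3]
  exact nls_key c
    (Complex.exp (Complex.I * (x : ℂ) ^ 2 / (4 * (t : ℂ)) +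
      Complex.I * (σ : ℂ) * ((b ^ 2 * Real.log t : ℝ) : ℂ)))
    ((Real.sqrt t : ℝ) : ℂ) (t : ℂ) (x : ℂ) (b : ℂ) (σ : ℂ) hst
end

section
/- Let d ≥ 1, a ∈ ℂ, σ ∈ {1,-1}, and define u : (0,∞) × ℝ^d → ℂ by u(t,x) = a · exp(i‖x‖²/(4t)) / (it)^(d/2) · exp( i σ |a|^(2/d) log t ), where (it)^(d/2) is the principal complex power. Then for every t > 0 and x ∈ ℝ^d, i ∂_t u(t,x) + Σ_{j=1}^d ∂²_{x_j} u(t,x) + σ |u(t,x)|^(2/d) u(t,x) = 0. -/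
lemma quad_iter (a P E c : ℂ) (r b : ℝ) :
    iteratedDeriv 2 (fun s : ℝ =>
        a * Complex.exp (Complex.I * ((r + b * s + s ^ 2 : ℝ) : ℂ) / c) / P * E) 0 =
      a * Complex.exp (Complex.I * ((r : ℝ) : ℂ) / c) / P * E *
        ((Complex.I * (b : ℂ) / c) ^ 2 + 2 * Complex.I / c) := by
  have hp : ∀ s : ℝ, HasDerivAt (fun s : ℝ => r + b * s + s ^ 2) (b + 2 * s) s := by
    intro s
    have h := (((hasDerivAt_id s).const_mul b).const_add r).add (hasDerivAt_pow 2 s)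
    exact h.congr_deriv (by norm_num)
  have hf : ∀ s : ℝ, HasDerivAt
      (fun s : ℝ => a * Complex.exp (Complex.I * ((r + b * s + s ^ 2 : ℝ) : ℂ) / c) / P * E)
      (a * (Complex.exp (Complex.I * ((r + b * s + s ^ 2 : ℝ) : ℂ) / c) *
        (Complex.I * ((b + 2 * s : ℝ) : ℂ) / c)) / P * E) s := by
    intro s
    exact (((((hp s).ofReal_comp.const_mul Complex.I).div_const c).cexp.const_mul a).div_const
      P).mul_const E
  have hd1 : deriv (fun s : ℝ =>
      a * Complex.exp (Complex.I * ((r + b * s + s ^ 2 : ℝ) : ℂ) / c) / P * E) =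
      fun s : ℝ => a * (Complex.exp (Complex.I * ((r + b * s + s ^ 2 : ℝ) : ℂ) / c) *
        (Complex.I * ((b + 2 * s : ℝ) : ℂ) / c)) / P * E :=
    funext fun s => (hf s).deriv
  have hg : HasDerivAt (fun s : ℝ => a * (Complex.exp (Complex.I * ((r + b * s + s ^ 2 : ℝ) : ℂ) / c) *
        (Complex.I * ((b + 2 * s : ℝ) : ℂ) / c)) / P * E)
      (a * ((Complex.exp (Complex.I * ((r + b * 0 + 0 ^ 2 : ℝ) : ℂ) / c) *
          (Complex.I * ((b + 2 * 0 : ℝ) : ℂ) / c)) * (Complex.I * ((b + 2 * 0 : ℝ) : ℂ) / c) +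
        Complex.exp (Complex.I * ((r + b * 0 + 0 ^ 2 : ℝ) : ℂ) / c) *
          (Complex.I * ((2 * 1 : ℝ) : ℂ) / c)) / P * E) 0 := by
    have hE := (((hp 0).ofReal_comp.const_mul Complex.I).div_const c).cexp
    have hL := ((((hasDerivAt_id (0 : ℝ)).const_mul 2).const_add b).ofReal_comp.const_mul
      Complex.I).div_const c
    exact (((hE.mul hL).const_mul a).div_const P).mul_const E
  rw [show (2 : ℕ) = 1 + 1 from rfl, iteratedDeriv_succ, iteratedDeriv_one, hd1, hg.deriv]
  norm_num
  ring

set_option maxHeartbeats 2000000 in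
/-- The function `u(t,x) = a e^{i‖x‖²/(4t)} / (it)^{d/2} · e^{i σ |a|^{2/d} log t}`
(principal complex power) satisfies pointwise the critical NLS
`i ∂_t u + Δ u + σ |u|^{2/d} u = 0` on `(0,∞) × ℝ^d`, when `σ = ±1`. -/
theorem stmt_10 (d : ℕ) (hd : 1 ≤ d) (a : ℂ) (σ : ℝ) (hσ : σ = 1 ∨ σ = -1)
    (u : ℝ → EuclideanSpace ℝ (Fin d) → ℂ)
    (hu : ∀ (t : ℝ) (x : EuclideanSpace ℝ (Fin d)), u t x =
      a * Complex.exp (Complex.I * ((‖x‖ ^ 2 : ℝ) : ℂ) / (4 * (t : ℂ))) /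
        (Complex.I * (t : ℂ)) ^ ((d : ℂ) / 2) *
        Complex.exp (Complex.I * (σ : ℂ) *
          ((‖a‖ ^ ((2 : ℝ) / d) * Real.log t : ℝ) : ℂ))) :
    ∀ t : ℝ, 0 < t → ∀ x : EuclideanSpace ℝ (Fin d),
      Complex.I * deriv (fun τ : ℝ => u τ x) t +
        ∑ j : Fin d,
          iteratedDeriv 2 (fun s : ℝ => u t (x + s • EuclideanSpace.single j (1 : ℝ))) 0 +
        (σ : ℂ) * ((‖u t x‖ ^ ((2 : ℝ) / d) : ℝ) : ℂ) * u t x = 0 := by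
  intro t ht x
  have hd0 : (d : ℝ) ≠ 0 := Nat.cast_ne_zero.mpr (by omega)
  have htC : (t : ℂ) ≠ 0 := Complex.ofReal_ne_zero.mpr ht.ne'
  have hIt : Complex.I * (t : ℂ) ≠ 0 := mul_ne_zero Complex.I_ne_zero htC
  have hslit : Complex.I * (t : ℂ) ∈ Complex.slitPlane := by
    rw [Complex.mem_slitPlane_iff]
    right
    simp [Complex.mul_im, ht.ne']
  have hP : (Complex.I * (t : ℂ)) ^ ((d : ℂ) / 2) ≠ 0 := by
    simp [Complex.cpow_eq_zero_iff, hIt]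
  -- time derivative
  have h1C : HasDerivAt (fun τ : ℝ => (τ : ℂ)) 1 t := by
    simpa using (hasDerivAt_id t).ofReal_comp
  have h4t : (4 : ℂ) * (t : ℂ) ≠ 0 := by simp [htC]
  have hfrac := (hasDerivAt_const t (Complex.I * ((‖x‖ ^ 2 : ℝ) : ℂ))).div
    (h1C.const_mul 4) h4t
  have hE1 := hfrac.cexp
  have hPd := (((hasDerivAt_id ((t : ℝ) : ℂ)).const_mul Complex.I).cpow_const
    (c := (d : ℂ) / 2) hslit).comp_ofReal
  have hA := (hE1.const_mul a).div hPd hP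
  have hE2 := (((Real.hasDerivAt_log ht.ne').const_mul
      (‖a‖ ^ ((2 : ℝ) / d))).ofReal_comp.const_mul (Complex.I * (σ : ℂ))).cexp
  have hU := hA.mul hE2
  -- spatial: norm expansion
  have hnorm : ∀ (j : Fin d) (s : ℝ),
      ‖x + s • EuclideanSpace.single j (1 : ℝ)‖ ^ 2 = ‖x‖ ^ 2 + 2 * x j * s + s ^ 2 := by
    intro j s
    rw [norm_add_sq_real]
    simp only [real_inner_smul_right, EuclideanSpace.inner_single_right, norm_smul,
      EuclideanSpace.norm_single, mul_pow, sq_abs, norm_one, RCLike.inner_apply,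
      starRingEnd_apply, star_one, one_mul, mul_one, star_trivial, Real.norm_eq_abs]
    ring
  -- sum of quadratic coefficients
  have hx2 : ∑ j : Fin d, (x j) ^ 2 = ‖x‖ ^ 2 := by
    rw [EuclideanSpace.norm_eq, Real.sq_sqrt (by positivity)]
    simp [Real.norm_eq_abs, sq_abs]
  have hsum : ∑ j : Fin d, ((Complex.I * ((2 * x j : ℝ) : ℂ) / (4 * (t : ℂ))) ^ 2 +
        2 * Complex.I / (4 * (t : ℂ))) =
      -((‖x‖ ^ 2 : ℝ) : ℂ) / (4 * (t : ℂ) ^ 2) + (d : ℂ) * Complex.I / (2 * (t : ℂ)) := by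
    have hc : ∀ j : Fin d, (Complex.I * ((2 * x j : ℝ) : ℂ) / (4 * (t : ℂ))) ^ 2 +
        2 * Complex.I / (4 * (t : ℂ)) =
        -((((x j) ^ 2 : ℝ)) : ℂ) / (4 * (t : ℂ) ^ 2) + 2 * Complex.I / (4 * (t : ℂ)) := by
      intro j
      rw [div_pow, mul_pow, Complex.I_sq]
      push_cast
      field_simp
      ring
    rw [Finset.sum_congr rfl fun j _ => hc j, Finset.sum_add_distrib, Finset.sum_const,
      Finset.card_univ, Fintype.card_fin, nsmul_eq_mul]
    have h2 : ∑ j : Fin d, -((((x j) ^ 2 : ℝ)) : ℂ) / (4 * (t : ℂ) ^ 2) =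
        -((‖x‖ ^ 2 : ℝ) : ℂ) / (4 * (t : ℂ) ^ 2) := by
      rw [← Finset.sum_div, ← hx2]
      push_cast
      rw [Finset.sum_neg_distrib]
    rw [h2]
    field_simp
    ring
  -- nonlinear term
  have hpow : (‖a * Complex.exp (Complex.I * ((‖x‖ ^ 2 : ℝ) : ℂ) / (4 * (t : ℂ))) /
        (Complex.I * (t : ℂ)) ^ ((d : ℂ) / 2) *
        Complex.exp (Complex.I * (σ : ℂ) *
          ((‖a‖ ^ ((2 : ℝ) / d) * Real.log t : ℝ) : ℂ))‖) ^ ((2 : ℝ) / d) =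
      ‖a‖ ^ ((2 : ℝ) / d) / t := by
    have e1 : Complex.I * ((‖x‖ ^ 2 : ℝ) : ℂ) / (4 * (t : ℂ)) =
        ((‖x‖ ^ 2 / (4 * t) : ℝ) : ℂ) * Complex.I := by push_cast; ring
    have e2 : Complex.I * (σ : ℂ) * ((‖a‖ ^ ((2 : ℝ) / d) * Real.log t : ℝ) : ℂ) =
        ((σ * (‖a‖ ^ ((2 : ℝ) / d) * Real.log t) : ℝ) : ℂ) * Complex.I := by
      push_cast; ring
    have e3 : ((d : ℂ) / 2) = (((d : ℝ) / 2 : ℝ) : ℂ) := by push_cast; ring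
    rw [e1, e2, norm_mul, norm_div, norm_mul, Complex.norm_exp_ofReal_mul_I,
      Complex.norm_exp_ofReal_mul_I, e3, Complex.norm_cpow_of_ne_zero hIt]
    simp only [Complex.ofReal_re, Complex.ofReal_im, mul_zero, Real.exp_zero]
    rw [norm_mul, Complex.norm_I, Complex.norm_real, Real.norm_of_nonneg ht.le]
    rw [mul_one, div_one, one_mul, mul_one]
    rw [Real.div_rpow (norm_nonneg a) (Real.rpow_nonneg ht.le _),
      ← Real.rpow_mul ht.le]
    have h5 : (d : ℝ) / 2 * (2 / (d : ℝ)) = 1 := by field_simp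
    rw [h5, Real.rpow_one]
  -- assemble
  simp only [id_eq, Pi.div_apply] at hU
  simp only [hu, hnorm]
  have hU' : HasDerivAt (fun τ : ℝ =>
      a * Complex.exp (Complex.I * ((‖x‖ ^ 2 : ℝ) : ℂ) / (4 * (τ : ℂ))) /
        (Complex.I * (τ : ℂ)) ^ ((d : ℂ) / 2) *
        Complex.exp (Complex.I * (σ : ℂ) *
          ((‖a‖ ^ ((2 : ℝ) / d) * Real.log τ : ℝ) : ℂ))) _ t := hU
  rw [hU'.deriv, hpow]
  simp only [quad_iter]
  rw [← Finset.mul_sum, hsum, Complex.cpow_sub _ _ hIt, Complex.cpow_one]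
  have h3 : Complex.I ^ 3 = -Complex.I := by
    rw [pow_succ, Complex.I_sq]; ring
  have h4 : Complex.I ^ 4 = 1 := by
    rw [show (4:ℕ) = 2*2 from rfl, pow_mul, Complex.I_sq]; norm_num
  push_cast
  have hP2 : (Complex.I * (t : ℂ)) ^ ((d : ℂ) * (1 / 2)) ≠ 0 := by
    rw [show (d : ℂ) * (1 / 2) = (d : ℂ) / 2 by ring]
    exact hP
  field_simp [Complex.exp_ne_zero, htC, hP, Complex.I_ne_zero]
  ring_nf
  simp only [Complex.I_sq, Complex.inv_I, h3, h4]
  field_simp [Complex.exp_ne_zero, htC, hP2, Complex.I_ne_zero]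
  ring_nf
end
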